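/- Let G be a down-left graph G(m,n,a,b) with a_i + 1 < b_{i-1} for all i. If W is a maximal independent set of G containing a vertex x_{i,j} with (i,j) ≠ (m,n), then exactly one of x_{i+1,j} or x_{i,j+1} is a vertex of G and lies in W. -/

import Mathlib

/-- The graph `G(m,n)`: vertices are pairs `(i,j)` (0-indexed, corresponding to
`x_{i+1,j+1}`), and `x_{i,j} ~ x_{k,l}` iff (`i < k` and `j > l`) or (`i > k` and `j < l`). -/
def gridGraph (m n : ℕ) : SimpleGraph (Fin m × Fin n) where
  Adj u v := (u.1 < v.1 ∧ v.2 < u.2) ∨ (v.1 < u.1 ∧ u.2 < v.2)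
  symm := ⟨fun u v h => Or.symm h⟩
  loopless := ⟨fun u h => by rcases h with ⟨h, -⟩ | ⟨h, -⟩ <;> exact absurd h (lt_irrefl _)⟩

/-- `W` is an independent set of the induced subgraph of `G` on `A`. -/
def IndepOn {V : Type*} (G : SimpleGraph V) (A W : Set V) : Prop :=
  W ⊆ A ∧ ∀ u ∈ W, ∀ v ∈ W, ¬ G.Adj u v

/-- `W` is a maximal independent set of the induced subgraph of `G` on `A`. -/
def MaxIndepOn {V : Type*} (G : SimpleGraph V) (A W : Set V) : Prop :=
  IndepOn G A W ∧ ∀ W', IndepOn G A W' → W ⊆ W' → W' = W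

/- Down-left graph setup (1-indexed data, 0-indexed vertices): `a`, `b` encode the
vectors `(a_1,…,a_m)`, `(b_1,…,b_m)` with `0 = a_1 ≤ … ≤ a_m < n`,
`1 < b_1 ≤ … ≤ b_m = n + 1`, `a_i < b_i` for `2 ≤ i ≤ m - 1`.  The down-left graph
`G(m,n,a,b)` is the induced subgraph of `G(m,n)` on the vertex set `A`, where the
vertex `x_{i,j}` (i.e. the pair `(i-1, j-1) : Fin m × Fin n`) is kept iff
`a_i < j < b_i`. -/
/-- in a down-left graph with `a_i + 1 < b_{i-1}` for all `i`, a maximal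
independent set `W` containing `x_{i,j}` with `(i,j) ≠ (m,n)` contains exactly one of
`x_{i+1,j}` and `x_{i,j+1}` (which in particular is a vertex of the graph). -/
theorem stmt10 (m n : ℕ) (hm : 1 ≤ m) (hmn : m ≤ n)
    (a b : ℕ → ℕ)
    (ha1 : a 1 = 0)
    (hamono : ∀ i, 1 ≤ i → i < m → a i ≤ a (i + 1))
    (ham : a m < n)
    (hb1 : 1 < b 1)
    (hbmono : ∀ i, 1 ≤ i → i < m → b i ≤ b (i + 1))
    (hbm : b m = n + 1)
    (hab : ∀ i, 2 ≤ i → i ≤ m - 1 → a i < b i)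
    (A : Set (Fin m × Fin n))
    (hA : A = {p : Fin m × Fin n |
      a (p.1.1 + 1) < p.2.1 + 1 ∧ p.2.1 + 1 < b (p.1.1 + 1)})
    (hab2 : ∀ i, 2 ≤ i → i ≤ m → a i + 1 < b (i - 1))
    (W : Set (Fin m × Fin n))
    (hW : MaxIndepOn (gridGraph m n) A W)
    (i : Fin m) (j : Fin n) (hmem : (i, j) ∈ W)
    (hne : ¬ (i.1 = m - 1 ∧ j.1 = n - 1)) :
    Xor' (∃ h : i.1 + 1 < m,
            ((⟨i.1 + 1, h⟩ : Fin m), j) ∈ A ∧ ((⟨i.1 + 1, h⟩ : Fin m), j) ∈ W)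
         (∃ h : j.1 + 1 < n,
            (i, (⟨j.1 + 1, h⟩ : Fin n)) ∈ A ∧ (i, (⟨j.1 + 1, h⟩ : Fin n)) ∈ W) := by
  obtain ⟨⟨hWA, hWind⟩, hWmax⟩ := hW
  have memA : ∀ p : Fin m × Fin n,
      p ∈ A ↔ a (p.1.1 + 1) < p.2.1 + 1 ∧ p.2.1 + 1 < b (p.1.1 + 1) := by
    intro p; rw [hA]; exact Iff.rfl
  have adjIff : ∀ u v : Fin m × Fin n, (gridGraph m n).Adj u v ↔
      ((u.1.1 < v.1.1 ∧ v.2.1 < u.2.1) ∨ (v.1.1 < u.1.1 ∧ u.2.1 < v.2.1)) :=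
    fun u v => Iff.rfl
  have amono : ∀ p q, 1 ≤ p → p ≤ q → q ≤ m → a p ≤ a q := by
    intro p q hp hpq hqm
    induction q with
    | zero => omega
    | succ q ih =>
      rcases Nat.lt_or_ge q p with h | h
      · have hpq' : p = q + 1 := by omega
        rw [hpq']
      · exact le_trans (ih h (by omega)) (hamono q (by omega) (by omega))
  have hext : ∀ x : Fin m × Fin n, x ∈ A → x ∉ W →
      ∃ w ∈ W, (gridGraph m n).Adj x w := by
    intro x hxA hxW
    by_contra h
    push_neg at h
    have hind : IndepOn (gridGraph m n) A (insert x W) := by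
      constructor
      · exact Set.insert_subset hxA hWA
      · intro u hu v hv
        rcases hu with rfl | hu <;> rcases hv with rfl | hv
        · exact (gridGraph m n).loopless.irrefl _
        · exact h v hv
        · exact fun hadj => h u hu hadj.symm
        · exact hWind u hu v hv
    have heq := hWmax _ hind (Set.subset_insert x W)
    exact hxW (heq ▸ Set.mem_insert x W)
  have hij := (memA (i, j)).1 (hWA hmem)
  simp only at hij
  push_neg at hne
  by_cases hc : j.1 + 1 < n ∧ j.1 + 2 < b (i.1 + 1)
  · -- x_{i,j+1} is a vertex
    obtain ⟨hjn, hjb⟩ := hc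
    have hv1A : (i, (⟨j.1 + 1, hjn⟩ : Fin n)) ∈ A := (memA _).2 (by simp only; omega)
    by_cases hv1W : (i, (⟨j.1 + 1, hjn⟩ : Fin n)) ∈ W
    · refine Or.inr ⟨⟨hjn, hv1A, hv1W⟩, ?_⟩
      rintro ⟨h1, -, hw1⟩
      exact hWind _ hw1 _ hv1W ((adjIff _ _).2 (by simp only; omega))
    · obtain ⟨⟨⟨p, hp⟩, ⟨q, hq⟩⟩, hwW, hadj⟩ := hext _ hv1A hv1W
      have hadj' := (adjIff _ _).1 hadj
      simp only at hadj'
      have hwA := (memA _).1 (hWA hwW)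
      simp only at hwA
      rcases hadj' with ⟨g1, g2⟩ | ⟨g1, g2⟩
      · -- i.1 < p, q < j.1 + 1
        rcases Nat.lt_or_ge q j.1 with hqj | hqj
        · exact (hWind _ hmem _ hwW ((adjIff _ _).2 (by simp only; omega))).elim
        · have hqj' : q = j.1 := by omega
          have him : i.1 + 1 < m := by omega
          have hv2A : ((⟨i.1 + 1, him⟩ : Fin m), j) ∈ A := by
            refine (memA _).2 ?_
            have h1 : a (i.1 + 1 + 1) ≤ a (p + 1) :=
              amono (i.1 + 1 + 1) (p + 1) (by omega) (by omega) (by omega)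
            have h2 := hbmono (i.1 + 1) (by omega) him
            simp only
            omega
          by_cases hv2W : ((⟨i.1 + 1, him⟩ : Fin m), j) ∈ W
          · refine Or.inl ⟨⟨him, hv2A, hv2W⟩, ?_⟩
            rintro ⟨h2', -, hw2⟩
            exact hv1W hw2
          · obtain ⟨⟨⟨r, hr⟩, ⟨s, hs⟩⟩, hw'W, hadj2⟩ := hext _ hv2A hv2W
            have hadj2' := (adjIff _ _).1 hadj2
            simp only at hadj2'
            rcases hadj2' with ⟨g1', g2'⟩ | ⟨g1', g2'⟩
            · exact (hWind _ hmem _ hw'W ((adjIff _ _).2 (by simp only; omega))).elim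
            · -- r < i.1 + 1, j.1 < s
              rcases Nat.lt_or_ge r i.1 with hri | hri
              · exact (hWind _ hmem _ hw'W ((adjIff _ _).2 (by simp only; omega))).elim
              · rcases Nat.lt_or_ge (j.1 + 1) s with hs1 | hs1
                · exact (hWind _ hw'W _ hwW ((adjIff _ _).2 (by simp only; omega))).elim
                · have heq2 : ((⟨r, hr⟩ : Fin m), (⟨s, hs⟩ : Fin n)) =
                      (i, (⟨j.1 + 1, hjn⟩ : Fin n)) := by
                    have h1 : (⟨r, hr⟩ : Fin m) = i := Fin.ext (by simp only; omega)
                    have h2 : (⟨s, hs⟩ : Fin n) = (⟨j.1 + 1, hjn⟩ : Fin n) :=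
                      Fin.ext (by simp only; omega)
                    rw [h1, h2]
                  exact (hv1W (heq2 ▸ hw'W)).elim
      · -- p < i.1, j.1 + 1 < q : adjacent to (i,j), contradiction
        exact (hWind _ hmem _ hwW ((adjIff _ _).2 (by simp only; omega))).elim
  · -- x_{i,j+1} is not a vertex; show x_{i+1,j} ∈ A ∩ W
    have him : i.1 + 1 < m := by
      by_contra h'
      have hi1 : i.1 + 1 = m := by have := i.2; omega
      have hbm' : b (i.1 + 1) = n + 1 := by rw [hi1]; exact hbm
      have hj := hne (by omega)
      have := j.2
      omega
    have hsub : a (i.1 + 1 + 1) < j.1 + 1 := by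
      rcases Nat.lt_or_ge (j.1 + 1) n with hjn | hjn
      · have h2 : a (i.1 + 1 + 1) + 1 < b (i.1 + 1) := hab2 (i.1 + 2) (by omega) (by omega)
        omega
      · have h2 : a (i.1 + 1 + 1) ≤ a m := amono (i.1 + 1 + 1) m (by omega) (by omega) (le_refl m)
        have := j.2
        omega
    have hv2A : ((⟨i.1 + 1, him⟩ : Fin m), j) ∈ A := by
      refine (memA _).2 ?_
      have h2 := hbmono (i.1 + 1) (by omega) him
      simp only
      omega
    have hv2W : ((⟨i.1 + 1, him⟩ : Fin m), j) ∈ W := by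
      by_contra h'
      obtain ⟨⟨⟨p, hp⟩, ⟨q, hq⟩⟩, hwW, hadj⟩ := hext _ hv2A h'
      have hadj' := (adjIff _ _).1 hadj
      simp only at hadj'
      have hwA := (memA _).1 (hWA hwW)
      simp only at hwA
      rcases hadj' with ⟨g1, g2⟩ | ⟨g1, g2⟩
      · exact hWind _ hmem _ hwW ((adjIff _ _).2 (by simp only; omega))
      · rcases Nat.lt_or_ge p i.1 with hpi | hpi
        · exact hWind _ hmem _ hwW ((adjIff _ _).2 (by simp only; omega))
        · have hpi' : p = i.1 := by omega
          rw [hpi'] at hwA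
          omega
    refine Or.inl ⟨⟨him, hv2A, hv2W⟩, ?_⟩
    rintro ⟨h2', hA2, -⟩
    have hA2' := (memA _).1 hA2
    simp only at hA2'
    exact hc ⟨h2', by omega⟩
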